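/- arXiv:1411.6225 — 2 statements merged into one kernel-verified Lean document; each statement's English description precedes it below -/
import Mathlib

section
/- Let Λ ⊆ E be a finite subset of a Euclidean space E, α ∈ E a nonzero vector, Q ⊆ E a subset, and define ⟨Λ⟩ = conv(Λ) ∩ (Λ + Q). Suppose H ⊆ E is a linear subspace with α ∉ H, and K ⊆ ⟨Λ⟩ is a finite subset such that (K − K) ∩ ((ℝα) \ {0}) = ∅, and for every x ∈ K the number of points of ⟨Λ⟩ on the line x + ℝα is at least |⟨x, α̌⟩| + 1, where α̌ = 2α/(α,α). Then |⟨Λ⟩ \ H| ≥ Σ_{x∈K} ⟨x, α̌⟩. -/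
open Set
open scoped Pointwise

/-- counting points of ⟨Λ⟩ = conv(Λ) ∩ (Λ + Q) outside a subspace H
via lines in the direction of a root α, where α̌ = (2/(α,α))·α. -/
theorem stmt_0 {E : Type*} [NormedAddCommGroup E] [InnerProductSpace ℝ E]
    (Λ Q : Set E) (hΛ : Λ.Finite)
    (hfin : (convexHull ℝ Λ ∩ (Λ + Q)).Finite)
    (α : E) (hα : α ≠ 0)
    (H : Submodule ℝ E) (hαH : α ∉ H)
    (K : Finset E)
    (hKsub : ↑K ⊆ convexHull ℝ Λ ∩ (Λ + Q))
    (hKdiff : ((↑K - ↑K : Set E) ∩ ({x | ∃ t : ℝ, x = t • α} \ {0})) = ∅)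
    (hline : ∀ x ∈ K,
      |(inner ℝ x ((2 / (inner ℝ α α : ℝ)) • α) : ℝ)| + 1 ≤
        (((convexHull ℝ Λ ∩ (Λ + Q)) ∩ {y | ∃ t : ℝ, y = x + t • α}).ncard : ℝ)) :
    ∑ x ∈ K, (inner ℝ x ((2 / (inner ℝ α α : ℝ)) • α) : ℝ) ≤
      (((convexHull ℝ Λ ∩ (Λ + Q)) \ ↑H).ncard : ℝ) := by
  classical
  set S : Set E := convexHull ℝ Λ ∩ (Λ + Q) with hSdef
  set F : Finset E := hfin.toFinset with hF
  have hmemF : ∀ y, y ∈ F ↔ y ∈ S := fun y => hfin.mem_toFinset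
  set T : E → Finset E :=
    fun x => F.filter (fun y => (∃ t : ℝ, y = x + t • α) ∧ y ∉ H) with hT
  -- Step 1: per-line bound
  have key : ∀ x ∈ K, |(inner ℝ x ((2 / (inner ℝ α α : ℝ)) • α) : ℝ)| ≤ ((T x).card : ℝ) := by
    intro x hx
    have hL := hline x hx
    have hset : (S ∩ {y | ∃ t : ℝ, y = x + t • α})
        = ↑(F.filter fun y => ∃ t : ℝ, y = x + t • α) := by
      ext y
      simp [Finset.mem_filter, hmemF, Set.mem_inter_iff]
    rw [hset, Set.ncard_coe_finset] at hL
    have hsplit : (F.filter fun y => ∃ t : ℝ, y = x + t • α)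
        = T x ∪ ((F.filter fun y => ∃ t : ℝ, y = x + t • α).filter (fun y => y ∈ H)) := by
      rw [hT]
      ext y
      simp only [Finset.mem_union, Finset.mem_filter]
      tauto
    have hHcard : ((F.filter fun y => ∃ t : ℝ, y = x + t • α).filter (fun y => y ∈ H)).card ≤ 1 := by
      apply Finset.card_le_one.mpr
      intro a ha b hb
      simp only [Finset.mem_filter] at ha hb
      obtain ⟨⟨-, t1, ht1⟩, haH⟩ := ha
      obtain ⟨⟨-, t2, ht2⟩, hbH⟩ := hb
      have hsub : a - b = (t1 - t2) • α := by
        rw [ht1, ht2, sub_smul]; abel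
      by_contra hne
      have htne : t1 - t2 ≠ 0 := by
        intro h
        apply hne
        rw [ht1, ht2, sub_eq_zero.mp h]
      have : α ∈ H := by
        have : (t1 - t2)⁻¹ • (a - b) ∈ H := H.smul_mem _ (H.sub_mem haH hbH)
        rwa [hsub, smul_smul, inv_mul_cancel₀ htne, one_smul] at this
      exact hαH this
    have hcardle : (F.filter fun y => ∃ t : ℝ, y = x + t • α).card ≤ (T x).card + 1 := by
      calc (F.filter fun y => ∃ t : ℝ, y = x + t • α).card
          = (T x ∪ ((F.filter fun y => ∃ t : ℝ, y = x + t • α).filter (fun y => y ∈ H))).card := by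
            rw [← hsplit]
        _ ≤ (T x).card + ((F.filter fun y => ∃ t : ℝ, y = x + t • α).filter (fun y => y ∈ H)).card :=
            Finset.card_union_le _ _
        _ ≤ (T x).card + 1 := by omega
    have : ((F.filter fun y => ∃ t : ℝ, y = x + t • α).card : ℝ) ≤ ((T x).card : ℝ) + 1 := by
      exact_mod_cast hcardle
    linarith
  -- Step 2: disjointness
  have hdisj : ∀ x ∈ K, ∀ x' ∈ K, x ≠ x' → Disjoint (T x) (T x') := by
    intro x hx x' hx' hne
    rw [Finset.disjoint_left]
    intro y hy hy'
    simp only [hT, Finset.mem_filter] at hy hy'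
    obtain ⟨-, ⟨t, ht⟩, -⟩ := hy
    obtain ⟨-, ⟨t', ht'⟩, -⟩ := hy'
    have hxx' : x - x' = (t' - t) • α := by
      rw [sub_smul, sub_eq_sub_iff_add_eq_add, ← ht, ht']
      abel
    have hmem : (x - x') ∈ ((↑K - ↑K : Set E) ∩ ({z | ∃ t : ℝ, z = t • α} \ {0})) := by
      refine ⟨Set.sub_mem_sub hx hx', ⟨t' - t, hxx'⟩, ?_⟩
      simp only [Set.mem_singleton_iff]
      exact sub_ne_zero.mpr hne
    rw [hKdiff] at hmem
    exact hmem
  have hsum_card : ∑ x ∈ K, (T x).card = (K.biUnion T).card :=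
    (Finset.card_biUnion hdisj).symm
  have hsub2 : K.biUnion T ⊆ F.filter (fun y => y ∉ H) := by
    intro y hy
    simp only [Finset.mem_biUnion, hT, Finset.mem_filter] at hy ⊢
    obtain ⟨x, -, hyF, -, hyH⟩ := hy
    exact ⟨hyF, hyH⟩
  have hfinal_card : ∑ x ∈ K, (T x).card ≤ (F.filter (fun y => y ∉ H)).card := by
    rw [hsum_card]; exact Finset.card_le_card hsub2
  have hSH : (S \ ↑H) = ↑(F.filter (fun y => y ∉ H)) := by
    ext y
    simp [Finset.mem_filter, hmemF, Set.mem_diff]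
  have hncard : ((S \ ↑H).ncard : ℝ) = ((F.filter (fun y => y ∉ H)).card : ℝ) := by
    rw [hSH, Set.ncard_coe_finset]
  calc ∑ x ∈ K, (inner ℝ x ((2 / (inner ℝ α α : ℝ)) • α) : ℝ)
      ≤ ∑ x ∈ K, |(inner ℝ x ((2 / (inner ℝ α α : ℝ)) • α) : ℝ)| :=
        Finset.sum_le_sum fun x _ => le_abs_self _
    _ ≤ ∑ x ∈ K, ((T x).card : ℝ) := Finset.sum_le_sum key
    _ ≤ ((F.filter (fun y => y ∉ H)).card : ℝ) := by
        push_cast [← Nat.cast_sum]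
        exact_mod_cast hfinal_card
    _ = ((S \ ↑H).ncard : ℝ) := hncard.symm
end

section
/- In type B_6 (Δ = {±e_i, ±e_i±e_j} ⊆ ℝ⁶, |Δ| = 72), let λ = φ_6 = (1/2)(e_1+⋯+e_6) and Λ = Wλ (the 64 vectors with all coordinates ±1/2). Let H = {x ∈ ℝ⁶ : x₁ + x₃ = x₂ + x₄}. Then |Λ ∩ H| = 24, |Λ \ H| = 40, and 2·|Λ \ H| = 80 > |Δ| + 6 ≥ |Δ \ H| + 6. Moreover the set Ω = {−φ₆, φ₆−(e₁+e₂), φ₆−(e₃+e₄), φ₆−e₅, φ₆−(e₂+e₃+e₆)} ⊆ Λ spans H and satisfies (Ω − Ω) ∩ Δ = ∅. -/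
open Set
open scoped Pointwise

noncomputable section

/-- The `i`-th standard basis vector of ℝ^r. -/
def eV (r : ℕ) (i : Fin r) : EuclideanSpace ℝ (Fin r) := EuclideanSpace.single i 1

/-- The root system of type B_r: Δ = {±e_i, ±e_i ± e_j : i ≠ j}. -/
def rootsB (r : ℕ) : Set (EuclideanSpace ℝ (Fin r)) :=
  {v | (∃ i, v = eV r i ∨ v = -eV r i) ∨
    ∃ i j, i ≠ j ∧ ∃ s t : ℝ, (s = 1 ∨ s = -1) ∧ (t = 1 ∨ t = -1) ∧
      v = s • eV r i + t • eV r j}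

/-- The orbit of a vector of ℝ^r under the group of signed permutations of the
coordinates (the Weyl group of type B_r). -/
def signedPermOrbit (r : ℕ) (v : EuclideanSpace ℝ (Fin r)) :
    Set (EuclideanSpace ℝ (Fin r)) :=
  {y | ∃ (σ : Equiv.Perm (Fin r)) (ε : Fin r → ℝ),
    (∀ i, ε i = 1 ∨ ε i = -1) ∧ ∀ i, y i = ε i * v (σ i)}

/-- The fundamental weight φ_r = (1/2)(e_1 + ⋯ + e_r) of type B_r. -/
def phiB (r : ℕ) : EuclideanSpace ℝ (Fin r) := WithLp.toLp 2 (fun _ => 1 / 2)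

/-- The orbit Λ = Wφ₆ in type B₆. -/
def LamB6 : Set (EuclideanSpace ℝ (Fin 6)) := signedPermOrbit 6 (phiB 6)

/-- The hyperplane H = {x ∈ ℝ⁶ : x₁ + x₃ = x₂ + x₄}. -/
def HB6 : Set (EuclideanSpace ℝ (Fin 6)) := {x | x 0 + x 2 = x 1 + x 3}

/-- Ω = {−φ₆, φ₆−(e₁+e₂), φ₆−(e₃+e₄), φ₆−e₅, φ₆−(e₂+e₃+e₆)}. -/
def OmegaB6 : Set (EuclideanSpace ℝ (Fin 6)) :=
  {-phiB 6, phiB 6 - (eV 6 0 + eV 6 1), phiB 6 - (eV 6 2 + eV 6 3),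
    phiB 6 - eV 6 4, phiB 6 - (eV 6 1 + eV 6 2 + eV 6 5)}

-- chunk 1 tests
def fB (b : Fin 6 → Bool) : EuclideanSpace ℝ (Fin 6) :=
  WithLp.toLp 2 (fun i => if b i then (1/2 : ℝ) else -(1/2))

lemma fB_inj : Function.Injective fB := by
  intro b b' h
  funext i
  have := congrFun (congrArg WithLp.ofLp h) i
  simp only [fB, PiLp.toLp_apply] at this
  cases hb : b i <;> cases hb' : b' i <;> rw [hb, hb'] at this <;> norm_num at this <;> rfl

lemma lam_range : LamB6 = Set.range fB := by
  ext y
  constructor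
  · rintro ⟨σ, ε, hε, hy⟩
    refine ⟨fun i => if ε i = 1 then true else false, ?_⟩
    ext i
    simp only [fB]
    rcases hε i with h | h <;> simp only [fB, h, hy i, phiB, PiLp.toLp_apply] <;> norm_num
  · rintro ⟨b, rfl⟩
    refine ⟨1, fun i => if b i then 1 else -1, fun i => by cases hb : b i <;> simp [hb], fun i => ?_⟩
    simp only [fB, Equiv.Perm.one_apply, phiB, PiLp.toLp_apply]
    cases b i <;> norm_num

def pB (b : Fin 6 → Bool) : Prop :=
  (b 0).toNat + (b 2).toNat = (b 1).toNat + (b 3).toNat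

instance : DecidablePred pB := fun _ => instDecidableEqNat _ _

lemma fB_mem_H (b : Fin 6 → Bool) : fB b ∈ HB6 ↔ pB b := by
  simp only [HB6, fB, Set.mem_setOf_eq, pB, PiLp.toLp_apply]
  cases b 0 <;> cases b 1 <;> cases b 2 <;> cases b 3 <;> norm_num

lemma lam_inter : LamB6 ∩ HB6 = fB '' {b | pB b} := by
  rw [lam_range]
  ext y
  constructor
  · rintro ⟨⟨b, rfl⟩, hH⟩
    exact ⟨b, (fB_mem_H b).mp hH, rfl⟩
  · rintro ⟨b, hb, rfl⟩
    exact ⟨⟨b, rfl⟩, (fB_mem_H b).mpr hb⟩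

lemma lam_diff : LamB6 \ HB6 = fB '' {b | ¬ pB b} := by
  rw [lam_range]
  ext y
  constructor
  · rintro ⟨⟨b, rfl⟩, hH⟩
    exact ⟨b, fun h => hH ((fB_mem_H b).mpr h), rfl⟩
  · rintro ⟨b, hb, rfl⟩
    exact ⟨⟨b, rfl⟩, fun h => hb ((fB_mem_H b).mp h)⟩

lemma count_inter : (LamB6 ∩ HB6).ncard = 24 := by
  rw [lam_inter, Set.ncard_image_of_injective _ fB_inj]
  have : {b | pB b} = ↑(Finset.univ.filter pB) := by ext b; simp
  rw [this, Set.ncard_coe_finset]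
  decide

lemma count_diff : (LamB6 \ HB6).ncard = 40 := by
  rw [lam_diff, Set.ncard_image_of_injective _ fB_inj]
  have : {b | ¬ pB b} = ↑(Finset.univ.filter (fun b => ¬ pB b)) := by ext b; simp
  rw [this, Set.ncard_coe_finset]
  decide

abbrev DB : Type := (Fin 6 × Bool) ⊕ ({p : Fin 6 × Fin 6 // p.1 < p.2} × Bool × Bool)

def gB : DB → EuclideanSpace ℝ (Fin 6)
  | .inl (i, s) => if s then eV 6 i else -eV 6 i
  | .inr (⟨(i, j), _⟩, s, t) =>
      (if s then (1:ℝ) else -1) • eV 6 i + (if t then (1:ℝ) else -1) • eV 6 j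

lemma roots_sub : rootsB 6 ⊆ Set.range gB := by
  rintro v (⟨i, rfl | rfl⟩ | ⟨i, j, hij, s, t, hs, ht, rfl⟩)
  · exact ⟨.inl (i, true), rfl⟩
  · exact ⟨.inl (i, false), rfl⟩
  · rcases lt_or_gt_of_ne hij with h | h
    · rcases hs with rfl | rfl <;> rcases ht with rfl | rfl
      exacts [⟨.inr (⟨(i, j), h⟩, true, true), rfl⟩,
        ⟨.inr (⟨(i, j), h⟩, true, false), rfl⟩,
        ⟨.inr (⟨(i, j), h⟩, false, true), rfl⟩,
        ⟨.inr (⟨(i, j), h⟩, false, false), rfl⟩]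
    · rcases hs with rfl | rfl <;> rcases ht with rfl | rfl
      exacts [⟨.inr (⟨(j, i), h⟩, true, true), add_comm _ _⟩,
        ⟨.inr (⟨(j, i), h⟩, false, true), add_comm _ _⟩,
        ⟨.inr (⟨(j, i), h⟩, true, false), add_comm _ _⟩,
        ⟨.inr (⟨(j, i), h⟩, false, false), add_comm _ _⟩]

lemma roots_fin : (rootsB 6).Finite := (Set.finite_range gB).subset roots_sub

lemma roots_card : (rootsB 6).ncard ≤ 72 := by
  have h1 : (rootsB 6).ncard ≤ (Set.range gB).ncard :=
    Set.ncard_le_ncard roots_sub (Set.finite_range gB)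
  have h2 : (Set.range gB).ncard ≤ Nat.card DB := by
    rw [← Set.image_univ]
    calc (gB '' Set.univ).ncard ≤ Set.univ.ncard := Set.ncard_image_le Set.finite_univ
      _ = Nat.card DB := Set.ncard_univ _
  have h3 : Nat.card DB = 72 := by rw [Nat.card_eq_fintype_card]; decide
  omega

lemma ev0 : ∀ (k i : Fin 6), k ≠ i → eV 6 i k = 0 := by
  intro k i h
  simp [eV, EuclideanSpace.single_apply, h]

lemma ev1 : ∀ (i : Fin 6), eV 6 i i = 1 := by
  intro i; simp [eV, EuclideanSpace.single_apply]

lemma zero_not_root : (0 : EuclideanSpace ℝ (Fin 6)) ∉ rootsB 6 := by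
  rintro (⟨i, h | h⟩ | ⟨i, j, hij, s, t, hs, ht, h⟩)
  · have := congrFun (congrArg WithLp.ofLp h) i
    rw [ev1 i] at this
    simp at this
  · have := congrFun (congrArg WithLp.ofLp h) i
    simp only [PiLp.neg_apply] at this
    rw [ev1 i] at this
    norm_num at this
  · have := congrFun (congrArg WithLp.ofLp h) i
    simp only [PiLp.add_apply, PiLp.smul_apply, smul_eq_mul] at this
    rw [ev1 i, ev0 i j hij] at this
    rcases hs with rfl | rfl <;> norm_num at this

lemma root_three {v : EuclideanSpace ℝ (Fin 6)} (hv : v ∈ rootsB 6) (a b c : Fin 6)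
    (hab : a ≠ b) (hac : a ≠ c) (hbc : b ≠ c) : v a = 0 ∨ v b = 0 ∨ v c = 0 := by
  have key : ∀ a b c i j : Fin 6, a ≠ b → a ≠ c → b ≠ c →
      (a ≠ i ∧ a ≠ j) ∨ (b ≠ i ∧ b ≠ j) ∨ (c ≠ i ∧ c ≠ j) := by decide
  rcases hv with ⟨i, rfl | rfl⟩ | ⟨i, j, hij, s, t, hs, ht, rfl⟩
  · rcases key a b c i i hab hac hbc with ⟨h, -⟩ | ⟨h, -⟩ | ⟨h, -⟩
    · exact Or.inl (ev0 _ _ h)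
    · exact Or.inr (Or.inl (ev0 _ _ h))
    · exact Or.inr (Or.inr (ev0 _ _ h))
  · rcases key a b c i i hab hac hbc with ⟨h, -⟩ | ⟨h, -⟩ | ⟨h, -⟩
    · exact Or.inl (by simp [PiLp.neg_apply, ev0 _ _ h])
    · exact Or.inr (Or.inl (by simp [PiLp.neg_apply, ev0 _ _ h]))
    · exact Or.inr (Or.inr (by simp [PiLp.neg_apply, ev0 _ _ h]))
  · rcases key a b c i j hab hac hbc with ⟨h1, h2⟩ | ⟨h1, h2⟩ | ⟨h1, h2⟩
    · exact Or.inl (by simp [PiLp.add_apply, PiLp.smul_apply, ev0 _ _ h1, ev0 _ _ h2])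
    · exact Or.inr (Or.inl (by simp [PiLp.add_apply, PiLp.smul_apply, ev0 _ _ h1, ev0 _ _ h2]))
    · exact Or.inr (Or.inr (by simp [PiLp.add_apply, PiLp.smul_apply, ev0 _ _ h1, ev0 _ _ h2]))

lemma not_root_of_three (v : EuclideanSpace ℝ (Fin 6)) (a b c : Fin 6)
    (hab : a ≠ b) (hac : a ≠ c) (hbc : b ≠ c)
    (ha : v a ≠ 0) (hb : v b ≠ 0) (hc : v c ≠ 0) : v ∉ rootsB 6 := fun hv => by
  rcases root_three hv a b c hab hac hbc with h | h | h
  exacts [ha h, hb h, hc h]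

lemma mem_lam (y : EuclideanSpace ℝ (Fin 6)) (h : ∀ i, y i = 1/2 ∨ y i = -(1/2)) :
    y ∈ LamB6 := by
  refine ⟨1, fun i => 2 * y i, fun i => ?_, fun i => ?_⟩
  · rcases h i with h' | h' <;> norm_num [h']
  · show y i = 2 * y i * phiB 6 _
    rw [phiB, PiLp.toLp_apply]; ring

lemma omega_sub_lam : OmegaB6 ⊆ LamB6 := by
  intro x hx
  apply mem_lam
  simp only [OmegaB6, Set.mem_insert_iff, Set.mem_singleton_iff] at hx
  rcases hx with rfl | rfl | rfl | rfl | rfl <;>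
    · intro i
      have hI : i = 0 ∨ i = 1 ∨ i = 2 ∨ i = 3 ∨ i = 4 ∨ i = 5 := by omega
      rcases hI with rfl | rfl | rfl | rfl | rfl | rfl <;>
        · simp only [PiLp.add_apply, PiLp.sub_apply, PiLp.neg_apply, phiB, PiLp.toLp_apply, eV,
            EuclideanSpace.single_apply, Fin.reduceEq, reduceIte, if_true]
          try norm_num

lemma omega_sub_H : OmegaB6 ⊆ HB6 := by
  intro x hx
  simp only [OmegaB6, Set.mem_insert_iff, Set.mem_singleton_iff] at hx
  rcases hx with rfl | rfl | rfl | rfl | rfl <;>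
    · show _ + _ = _ + _
      simp only [PiLp.add_apply, PiLp.sub_apply, PiLp.neg_apply, phiB, PiLp.toLp_apply, eV,
        EuclideanSpace.single_apply, Fin.reduceEq, reduceIte, if_true]
      try norm_num

def Hsub : Submodule ℝ (EuclideanSpace ℝ (Fin 6)) where
  carrier := HB6
  add_mem' := by
    intro x y hx hy
    simp only [HB6, Set.mem_setOf_eq, PiLp.add_apply] at *
    linarith
  zero_mem' := by simp [HB6]
  smul_mem' := by
    intro c x hx
    simp only [HB6, Set.mem_setOf_eq, PiLp.smul_apply, smul_eq_mul] at *
    linear_combination c * hx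

lemma span_omega : (Submodule.span ℝ OmegaB6 : Set (EuclideanSpace ℝ (Fin 6))) = HB6 := by
  apply Set.Subset.antisymm
  · exact (Submodule.span_le (p := Hsub)).mpr omega_sub_H
  · intro x hx
    have hx' : x 0 + x 2 = x 1 + x 3 := hx
    have hrepr : x = (x 0 - 2*x 1 - x 3 - x 4 + x 5) • (-phiB 6)
        + (x 5 - x 1) • (phiB 6 - (eV 6 0 + eV 6 1))
        + (x 5 - x 1 + x 0 - x 3) • (phiB 6 - (eV 6 2 + eV 6 3))
        + (x 0 - x 1 - x 4 + x 5) • (phiB 6 - eV 6 4)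
        + (x 0 - x 1) • (phiB 6 - (eV 6 1 + eV 6 2 + eV 6 5)) := by
      ext i
      have hI : i = 0 ∨ i = 1 ∨ i = 2 ∨ i = 3 ∨ i = 4 ∨ i = 5 := by omega
      rcases hI with rfl | rfl | rfl | rfl | rfl | rfl <;>
        simp only [PiLp.add_apply, PiLp.sub_apply, PiLp.smul_apply, PiLp.neg_apply, smul_eq_mul,
          phiB, PiLp.toLp_apply, eV, EuclideanSpace.single_apply, Fin.reduceEq, if_true, if_false, reduceIte] <;>
        linarith
    rw [hrepr]
    refine Submodule.add_mem _ (Submodule.add_mem _ (Submodule.add_mem _ (Submodule.add_mem _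
      (Submodule.smul_mem _ _ ?_) (Submodule.smul_mem _ _ ?_)) (Submodule.smul_mem _ _ ?_))
      (Submodule.smul_mem _ _ ?_)) (Submodule.smul_mem _ _ ?_) <;>
      · apply Submodule.subset_span
        simp [OmegaB6]

lemma diff_empty : ((OmegaB6 - OmegaB6) ∩ rootsB 6) = ∅ := by
  rw [Set.eq_empty_iff_forall_notMem]
  rintro v ⟨hd, hr⟩
  rw [Set.mem_sub] at hd
  obtain ⟨a, ha, b, hb, rfl⟩ := hd
  simp only [OmegaB6, Set.mem_insert_iff, Set.mem_singleton_iff] at ha hb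
  rcases ha with rfl | rfl | rfl | rfl | rfl <;> rcases hb with rfl | rfl | rfl | rfl | rfl <;>
    first
  | (rw [sub_self] at hr; exact zero_not_root hr)
  | (refine absurd hr (not_root_of_three _ 2 3 4 (by decide) (by decide) (by decide) ?_ ?_ ?_) <;>
      (simp only [PiLp.sub_apply, PiLp.add_apply, PiLp.neg_apply, phiB, PiLp.toLp_apply, eV, EuclideanSpace.single_apply, Fin.reduceEq, reduceIte, if_true]; (try norm_num); done))
  | (refine absurd hr (not_root_of_three _ 0 1 4 (by decide) (by decide) (by decide) ?_ ?_ ?_) <;>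
      (simp only [PiLp.sub_apply, PiLp.add_apply, PiLp.neg_apply, phiB, PiLp.toLp_apply, eV, EuclideanSpace.single_apply, Fin.reduceEq, reduceIte, if_true]; (try norm_num); done))
  | (refine absurd hr (not_root_of_three _ 0 1 2 (by decide) (by decide) (by decide) ?_ ?_ ?_) <;>
      (simp only [PiLp.sub_apply, PiLp.add_apply, PiLp.neg_apply, phiB, PiLp.toLp_apply, eV, EuclideanSpace.single_apply, Fin.reduceEq, reduceIte, if_true]; (try norm_num); done))
  | (refine absurd hr (not_root_of_three _ 0 3 4 (by decide) (by decide) (by decide) ?_ ?_ ?_) <;>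
      (simp only [PiLp.sub_apply, PiLp.add_apply, PiLp.neg_apply, phiB, PiLp.toLp_apply, eV, EuclideanSpace.single_apply, Fin.reduceEq, reduceIte, if_true]; (try norm_num); done))
  | (refine absurd hr (not_root_of_three _ 0 2 5 (by decide) (by decide) (by decide) ?_ ?_ ?_) <;>
      (simp only [PiLp.sub_apply, PiLp.add_apply, PiLp.neg_apply, phiB, PiLp.toLp_apply, eV, EuclideanSpace.single_apply, Fin.reduceEq, reduceIte, if_true]; (try norm_num); done))
  | (refine absurd hr (not_root_of_three _ 1 3 5 (by decide) (by decide) (by decide) ?_ ?_ ?_) <;>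
      (simp only [PiLp.sub_apply, PiLp.add_apply, PiLp.neg_apply, phiB, PiLp.toLp_apply, eV, EuclideanSpace.single_apply, Fin.reduceEq, reduceIte, if_true]; (try norm_num); done))
  | (refine absurd hr (not_root_of_three _ 1 2 4 (by decide) (by decide) (by decide) ?_ ?_ ?_) <;>
      (simp only [PiLp.sub_apply, PiLp.add_apply, PiLp.neg_apply, phiB, PiLp.toLp_apply, eV, EuclideanSpace.single_apply, Fin.reduceEq, reduceIte, if_true]; (try norm_num); done))

/-- in type B₆ with λ = φ₆, Λ = Wλ and H = {x₁ + x₃ = x₂ + x₄}: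
|Λ ∩ H| = 24, |Λ \ H| = 40, 2·|Λ \ H| = 80 > |Δ| + 6 ≥ |Δ \ H| + 6; moreover
Ω ⊆ Λ spans H and (Ω − Ω) ∩ Δ = ∅. -/
theorem stmt_10 :
    (LamB6 ∩ HB6).ncard = 24 ∧
    (LamB6 \ HB6).ncard = 40 ∧
    2 * (LamB6 \ HB6).ncard = 80 ∧
    (rootsB 6).ncard + 6 < 80 ∧
    (rootsB 6 \ HB6).ncard + 6 ≤ (rootsB 6).ncard + 6 ∧
    OmegaB6 ⊆ LamB6 ∧
    (Submodule.span ℝ OmegaB6 : Set (EuclideanSpace ℝ (Fin 6))) = HB6 ∧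
    ((OmegaB6 - OmegaB6) ∩ rootsB 6) = ∅ := by
  refine ⟨count_inter, count_diff, ?_, ?_, ?_, omega_sub_lam, span_omega, diff_empty⟩
  · rw [count_diff]
  · have := roots_card
    omega
  · exact Nat.add_le_add_right (Set.ncard_le_ncard Set.diff_subset roots_fin) 6

end
end
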